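/- Let D ⊆ ℝ² be a compact set with 0 ∈ interior D. Then there exists a compact convex set K with 0 ∈ interior K such that D is the Voronoi flower of K with respect to the origin, D = F₀(K), if and only if the complement ℝ² \ i(D \ {0}) of the image of D \ {0} under the inversion i is a convex set. -/

import Mathlib

open Metric Real Set MeasureTheory
open scoped RealInnerProductSpace

noncomputable section

/-- The Euclidean plane. -/
abbrev E2 := EuclideanSpace ℝ (Fin 2)

/-- The unit vector `u_θ = (cos θ, sin θ)`. -/
def uvec (θ : ℝ) : E2 := (WithLp.equiv 2 (Fin 2 → ℝ)).symm ![Real.cos θ, Real.sin θ]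

/-- The vector `v_θ = (−sin θ, cos θ)`. -/
def vvec (θ : ℝ) : E2 := (WithLp.equiv 2 (Fin 2 → ℝ)).symm ![-Real.sin θ, Real.cos θ]

/-- The Voronoi flower of `L` with respect to `x`: the union over `s ∈ L` of the closed
balls admitting the segment `[x, s]` as a diameter. -/
def vflower (x : E2) (L : Set E2) : Set E2 :=
  ⋃ s ∈ L, closedBall ((2:ℝ)⁻¹ • (x + s)) (‖s - x‖ / 2)

/-- The support function of `L` with respect to `x`: `p_x(L, w) = sup_{s ∈ L} ⟨s − x, w⟩`. -/
def suppf (x : E2) (L : Set E2) (w : E2) : ℝ :=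
  sSup ((fun s => ⟪s - x, w⟫) '' L)

namespace VFaux

lemma inv_eq (w : E2) : EuclideanGeometry.inversion (0:E2) 1 w = (‖w‖^2)⁻¹ • w := by
  rw [EuclideanGeometry.inversion_def]
  simp [dist_eq_norm, div_pow]

lemma inv_ne_zero {w : E2} (hw : w ≠ 0) : EuclideanGeometry.inversion (0:E2) 1 w ≠ 0 := by
  rw [inv_eq]
  have h : ‖w‖ ≠ 0 := norm_ne_zero_iff.2 hw
  exact smul_ne_zero (by positivity) hw

lemma inv_inv' (w : E2) :
    EuclideanGeometry.inversion (0:E2) 1 (EuclideanGeometry.inversion (0:E2) 1 w) = w :=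
  EuclideanGeometry.inversion_inversion 0 one_ne_zero w

lemma norm_inv_eq (w : E2) :
    ‖EuclideanGeometry.inversion (0:E2) 1 w‖ = ‖w‖⁻¹ := by
  have h := EuclideanGeometry.dist_inversion_center (0:E2) w 1
  simpa [dist_eq_norm, one_div] using h

lemma mem_A_iff (D : Set E2) (w : E2) :
    w ∈ EuclideanGeometry.inversion (0:E2) 1 '' (D \ {0}) ↔
      w ≠ 0 ∧ EuclideanGeometry.inversion (0:E2) 1 w ∈ D := by
  constructor
  · rintro ⟨y, ⟨hyD, hy0⟩, rfl⟩
    have hy0' : y ≠ 0 := by simpa using hy0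
    exact ⟨inv_ne_zero hy0', by rw [inv_inv']; exact hyD⟩
  · rintro ⟨hw, hD⟩
    exact ⟨EuclideanGeometry.inversion (0:E2) 1 w, ⟨hD, by simpa using inv_ne_zero hw⟩,
      inv_inv' w⟩

lemma key_calc {w : E2} (hw : w ≠ 0) (s : E2) :
    ‖EuclideanGeometry.inversion (0:E2) 1 w‖^2 ≤ ⟪EuclideanGeometry.inversion (0:E2) 1 w, s⟫ ↔
      1 ≤ ⟪w, s⟫ := by
  have hn : (0:ℝ) < ‖w‖ := norm_pos_iff.2 hw
  rw [inv_eq, real_inner_smul_left, norm_smul, Real.norm_eq_abs, abs_of_nonneg (by positivity),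
    mul_pow]
  have h2 : ((‖w‖^2)⁻¹)^2 * ‖w‖^2 = (‖w‖^2)⁻¹ * 1 := by field_simp
  rw [h2]
  exact mul_le_mul_iff_right₀ (by positivity)

lemma mem_vflower_iff {K : Set E2} (hK : K.Nonempty) (y : E2) :
    y ∈ vflower 0 K ↔ ∃ s ∈ K, ‖y‖^2 ≤ ⟪y, s⟫ := by
  have hiff : ∀ s : E2, ‖y - (2:ℝ)⁻¹ • s‖ ≤ ‖s‖/2 ↔ ‖y‖^2 ≤ ⟪y, s⟫ := by
    intro s
    have h1 : ‖y - (2:ℝ)⁻¹ • s‖^2 = ‖y‖^2 - ⟪y, s⟫ + ‖s‖^2/4 := by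
      rw [norm_sub_sq_real, real_inner_smul_right, norm_smul, Real.norm_eq_abs,
        abs_of_pos (by norm_num : (0:ℝ) < 2⁻¹)]
      ring
    constructor
    · intro h
      have h2 := pow_le_pow_left₀ (norm_nonneg (y - (2:ℝ)⁻¹ • s)) h 2
      nlinarith [h2, h1]
    · intro h
      have h2 : ‖y - (2:ℝ)⁻¹ • s‖^2 ≤ (‖s‖/2)^2 := by nlinarith [h1]
      nlinarith [norm_nonneg (y - (2:ℝ)⁻¹ • s), norm_nonneg s, h2]
  constructor
  · intro hy
    rw [vflower, mem_iUnion₂] at hy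
    obtain ⟨s, hs, h⟩ := hy
    rw [mem_closedBall, dist_eq_norm, zero_add, sub_zero] at h
    exact ⟨s, hs, (hiff s).1 h⟩
  · rintro ⟨s, hs, h⟩
    rw [vflower, mem_iUnion₂]
    refine ⟨s, hs, ?_⟩
    rw [mem_closedBall, dist_eq_norm, zero_add, sub_zero]
    exact (hiff s).2 h

end VFaux

open VFaux

theorem isVoronoiFlower_iff_inversion_compl_convex (D : Set E2) (hDc : IsCompact D)
    (h0 : (0:E2) ∈ interior D) :
    (∃ K : Set E2, IsCompact K ∧ Convex ℝ K ∧ (0:E2) ∈ interior K ∧ D = vflower 0 K)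
      ↔ Convex ℝ ((EuclideanGeometry.inversion (0:E2) 1 '' (D \ {0}))ᶜ) := by
  constructor
  · -- Forward direction
    rintro ⟨K, hKc, hKconv, hK0, rfl⟩
    have hKne : K.Nonempty := ⟨0, interior_subset hK0⟩
    have heq : (EuclideanGeometry.inversion (0:E2) 1 '' (vflower 0 K \ {0}))ᶜ
        = ⋂ s ∈ K, {w : E2 | ⟪w, s⟫ < 1} := by
      ext w
      rw [mem_compl_iff, mem_A_iff, mem_iInter₂]
      simp only [mem_setOf_eq]
      by_cases hw : w = 0
      · subst hw
        simp
      · have hmem : (EuclideanGeometry.inversion (0:E2) 1 w ∈ vflower 0 K) ↔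
            ∃ s ∈ K, 1 ≤ ⟪w, s⟫ := by
          rw [mem_vflower_iff hKne]
          exact exists_congr fun s => and_congr_right fun _ => key_calc hw s
        constructor
        · intro h s hs
          by_contra hle
          push_neg at hle
          exact h ⟨hw, hmem.2 ⟨s, hs, hle⟩⟩
        · rintro h ⟨-, hmem'⟩
          obtain ⟨s, hs, h1⟩ := hmem.1 hmem'
          exact absurd h1 (not_le.2 (h s hs))
    rw [heq]
    exact convex_iInter₂ fun s _ => convex_halfSpace_lt
      ⟨fun x y => by rw [inner_add_left], fun c x => by rw [real_inner_smul_left, smul_eq_mul]⟩ 1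
  · -- Reverse direction
    intro hconv
    set A : Set E2 := EuclideanGeometry.inversion (0:E2) 1 '' (D \ {0}) with hA
    have hD0 : (0:E2) ∈ D := interior_subset h0
    -- a closed ball inside D
    obtain ⟨ε0, hε0, hball0⟩ := Metric.mem_nhds_iff.1 (mem_interior_iff_mem_nhds.1 h0)
    set ε : ℝ := ε0/2 with hεdef
    have hε : 0 < ε := by positivity
    have hball : closedBall (0:E2) ε ⊆ D :=
      (closedBall_subset_ball (by simp [hεdef]; linarith)).trans hball0
    -- D is bounded
    obtain ⟨R, hR, hDR⟩ := hDc.isBounded.subset_closedBall_lt 0 0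
    -- elements of A are nonzero with norm ≥ R⁻¹
    have hAnorm : ∀ w ∈ A, R⁻¹ ≤ ‖w‖ := by
      rintro w ⟨y, ⟨hyD, hy0⟩, rfl⟩
      have hy0' : y ≠ 0 := by simpa using hy0
      have hy : ‖y‖ ≤ R := by simpa [dist_eq_norm] using hDR hyD
      rw [norm_inv_eq]
      exact inv_anti₀ (norm_pos_iff.2 hy0') hy
    have hAclosed : IsClosed A := by
      refine isClosed_of_closure_subset ?_
      intro w hw
      have hwn : R⁻¹ ≤ ‖w‖ :=
        closure_minimal hAnorm (isClosed_le continuous_const continuous_norm) hw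
      have hw0 : w ≠ 0 := by
        intro h
        rw [h, norm_zero] at hwn
        exact absurd hwn (not_le.2 (inv_pos.2 hR))
      have hcont : ContinuousWithinAt (EuclideanGeometry.inversion (0:E2) 1) A w :=
        (ContinuousAt.inversion continuousAt_const continuousAt_const continuousAt_id
          hw0).continuousWithinAt
      have h1 : EuclideanGeometry.inversion (0:E2) 1 w
          ∈ closure (EuclideanGeometry.inversion (0:E2) 1 '' A) := hcont.mem_closure_image hw
      have himg : EuclideanGeometry.inversion (0:E2) 1 '' A ⊆ D := by
        rintro y ⟨v, hv, rfl⟩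
        rw [hA] at hv
        obtain ⟨z, hz, rfl⟩ := hv
        rw [inv_inv']
        exact hz.1
      have h2 : EuclideanGeometry.inversion (0:E2) 1 w ∈ D :=
        closure_minimal himg hDc.isClosed h1
      exact (mem_A_iff D w).2 ⟨hw0, h2⟩
    have hCopen : IsOpen Aᶜ := hAclosed.isOpen_compl
    have hC0 : (0:E2) ∈ Aᶜ := by
      intro h
      exact ((mem_A_iff D 0).1 h).1 rfl
    -- Aᶜ is bounded by ε⁻¹
    have hCb : ∀ w : E2, w ∈ Aᶜ → ‖w‖ ≤ ε⁻¹ := by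
      intro w hw
      by_contra hlt
      push_neg at hlt
      apply hw
      have hw0 : w ≠ 0 := by
        intro h
        rw [h, norm_zero] at hlt
        exact absurd hlt (not_lt.2 (le_of_lt (inv_pos.2 hε)))
      refine (mem_A_iff D w).2 ⟨hw0, hball ?_⟩
      rw [mem_closedBall, dist_eq_norm, sub_zero, norm_inv_eq]
      exact inv_le_of_inv_le₀ hε (le_of_lt hlt)
    -- the polar body
    set K : Set E2 := {s : E2 | ∀ w ∈ Aᶜ, ⟪w, s⟫ ≤ 1} with hK
    obtain ⟨r, hr, hrC⟩ := Metric.isOpen_iff.1 hCopen 0 hC0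
    have hKb : K ⊆ closedBall 0 (2/r) := by
      intro s hs
      rw [mem_closedBall, dist_eq_norm, sub_zero]
      by_cases h0s : s = 0
      · rw [h0s, norm_zero]; positivity
      · have hsn : 0 < ‖s‖ := norm_pos_iff.2 h0s
        have hwmem : ((r/2) * ‖s‖⁻¹) • s ∈ ball (0:E2) r := by
          rw [mem_ball, dist_eq_norm, sub_zero, norm_smul, Real.norm_eq_abs,
            abs_of_pos (by positivity)]
          rw [mul_assoc, inv_mul_cancel₀ (ne_of_gt hsn), mul_one]
          linarith
        have h1 := hs _ (hrC hwmem)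
        rw [real_inner_smul_left, real_inner_self_eq_norm_sq] at h1
        have h3 : r/2 * ‖s‖⁻¹ * ‖s‖^2 = r/2 * ‖s‖ := by field_simp
        rw [h3] at h1
        rw [le_div_iff₀ hr]
        nlinarith
    have hKclosed : IsClosed K := by
      have : K = ⋂ w ∈ Aᶜ, {s : E2 | ⟪w, s⟫ ≤ 1} := by
        ext s
        simp only [hK, mem_setOf_eq, mem_iInter₂]
      rw [this]
      exact isClosed_biInter fun w _ =>
        isClosed_le (Continuous.inner continuous_const continuous_id) continuous_const
    have hKcomp : IsCompact K :=
      (isCompact_closedBall (0:E2) (2/r)).of_isClosed_subset hKclosed hKb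
    have hKconv : Convex ℝ K := by
      intro x hx y hy a b ha hb hab
      intro w hw
      have h1 := hx w hw
      have h2 := hy w hw
      rw [inner_add_right, real_inner_smul_right, real_inner_smul_right]
      nlinarith
    have h0K : (0:E2) ∈ interior K := by
      rw [mem_interior]
      refine ⟨ball 0 ε, ?_, isOpen_ball, mem_ball_self hε⟩
      intro s hs w hw
      have hsn : ‖s‖ ≤ ε := by
        rw [mem_ball, dist_eq_norm, sub_zero] at hs
        exact le_of_lt hs
      calc ⟪w, s⟫ ≤ ‖w‖ * ‖s‖ := real_inner_le_norm w s
        _ ≤ ε⁻¹ * ε := mul_le_mul (hCb w hw) hsn (norm_nonneg s) (by positivity)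
        _ = 1 := inv_mul_cancel₀ (ne_of_gt hε)
    -- the key duality
    have hkey : ∀ w : E2, w ∈ A ↔ ∃ s ∈ K, 1 ≤ ⟪w, s⟫ := by
      intro w
      constructor
      · intro hwA
        obtain ⟨f, hf⟩ := geometric_hahn_banach_open_point hconv hCopen
          (fun h => h hwA)
        set v : E2 := (InnerProductSpace.toDual ℝ E2).symm f with hv
        have hfv : ∀ x : E2, ⟪v, x⟫ = f x := fun x => InnerProductSpace.toDual_symm_apply
        have hfw : 0 < f w := by
          have := hf 0 hC0
          simpa using this
        refine ⟨(f w)⁻¹ • v, ?_, ?_⟩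
        · intro x hx
          rw [real_inner_smul_right, real_inner_comm, hfv]
          rw [inv_mul_le_iff₀ hfw, mul_one]
          exact le_of_lt (hf x hx)
        · rw [real_inner_smul_right, real_inner_comm, hfv, inv_mul_cancel₀ (ne_of_gt hfw)]
      · rintro ⟨s, hsK, hs1⟩
        by_contra hwA
        have hwC : w ∈ Aᶜ := hwA
        obtain ⟨δ, hδ, hδC⟩ := Metric.isOpen_iff.1 hCopen w hwC
        have hw0 : w ≠ 0 := by
          rintro rfl
          rw [inner_zero_left] at hs1
          linarith
        have hwn : 0 < ‖w‖ := norm_pos_iff.2 hw0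
        have htw : (1 + δ/(2*‖w‖)) • w ∈ ball w δ := by
          rw [mem_ball, dist_eq_norm]
          have heq2 : (1 + δ/(2*‖w‖)) • w - w = (δ/(2*‖w‖)) • w := by
            rw [add_smul, one_smul, add_sub_cancel_left]
          rw [heq2, norm_smul, Real.norm_eq_abs, abs_of_pos (by positivity)]
          have h4 : δ/(2*‖w‖) * ‖w‖ = δ/2 := by field_simp
          rw [h4]
          linarith
        have h2 := hsK _ (hδC htw)
        rw [real_inner_smul_left] at h2
        have ht1 : (0:ℝ) < δ/(2*‖w‖) := by positivity
        nlinarith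
    -- conclusion
    refine ⟨K, hKcomp, hKconv, h0K, ?_⟩
    have hKne : K.Nonempty := ⟨0, interior_subset h0K⟩
    ext y
    rw [mem_vflower_iff hKne]
    by_cases hy : y = 0
    · subst hy
      simp only [hD0, true_iff]
      exact ⟨0, interior_subset h0K, by simp⟩
    · have hy1 : y ∈ D ↔ EuclideanGeometry.inversion (0:E2) 1 y ∈ A := by
        rw [hA, mem_A_iff]
        constructor
        · intro hyD
          exact ⟨inv_ne_zero hy, by rw [inv_inv']; exact hyD⟩
        · rintro ⟨-, h⟩
          rwa [inv_inv'] at h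
      rw [hy1, hkey _]
      refine exists_congr fun s => and_congr_right fun _ => ?_
      have hiy : EuclideanGeometry.inversion (0:E2) 1 y ≠ 0 := inv_ne_zero hy
      have h := key_calc hiy s
      rw [inv_inv'] at h
      exact h.symm
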